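/- Fix γ > 0 and σ > 0 and set σ̃ := 2σ/γ. Suppose g¹, g², g³, … : [0,∞) → ℝ are differentiable, g¹(t) = 1 for all t ≥ 0, and for every integer n ≥ 2 and all t ≥ 0 one has d/dt gⁿ(t) = (γ/2)·n(n−1)·g^{n−1}(t) − (γ/2)·n·(σ̃+n−1)·gⁿ(t). Then for every integer n ≥ 2, gⁿ(t) converges as t → ∞ to Γ(n)·Γ(σ̃+1)/Γ(σ̃+n). -/

import Mathlib

open Real Finset Filter

/-- Long-time behavior of the mean sample Laplace transforms of subtree lengths under the
tree-valued Fleming–Viot dynamics with resampling rate `γ`: if `g¹ ≡ 1` and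
`d/dt gⁿ = (γ/2)n(n−1)g^{n−1} − (γ/2)n(σ̃+n−1)gⁿ` on `[0,∞)` for all `n ≥ 2`, where
`σ̃ = 2σ/γ`, then `gⁿ(t) → Γ(n)Γ(σ̃+1)/Γ(σ̃+n)` as `t → ∞`. -/

lemma ode_tendsto (b L : ℝ) (hb : 0 < b) (f h : ℝ → ℝ)
    (hf : ∀ t : ℝ, 0 ≤ t → HasDerivWithinAt f (h t - b * f t) (Set.Ici 0) t)
    (hh : ContinuousOn h (Set.Ici 0))
    (hlim : Tendsto h atTop (nhds L)) :
    Tendsto f atTop (nhds (L / b)) := by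
  set W : ℝ → ℝ := fun t => exp (b * t) * (f t - L / b) with hW
  have hWd : ∀ t : ℝ, 0 ≤ t →
      HasDerivWithinAt W (exp (b * t) * (h t - L)) (Set.Ici 0) t := by
    intro t ht
    have he : HasDerivWithinAt (fun t => exp (b * t)) (b * exp (b * t)) (Set.Ici 0) t := by
      simpa [mul_comm] using ((hasDerivAt_id t).const_mul b).exp.hasDerivWithinAt
    have := he.fun_mul ((hf t ht).sub_const (L / b))
    refine this.congr_deriv ?_
    field_simp
    ring
  have hWc : ContinuousOn W (Set.Ici 0) := fun t ht => (hWd t ht).continuousWithinAt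
  have key : ∀ ε : ℝ, 0 < ε → ∃ T : ℝ, 0 ≤ T ∧ ∀ t : ℝ, T ≤ t →
      |f t - L / b| ≤ exp (-(b * t)) * |W T| + ε / b := by
    intro ε hε
    obtain ⟨T₀, hT₀⟩ := (Metric.tendsto_atTop.mp hlim) ε hε
    set T := max T₀ 0 with hT
    have hT0 : (0:ℝ) ≤ T := le_max_right _ _
    refine ⟨T, hT0, fun t ht => ?_⟩
    have ht0 : (0:ℝ) ≤ t := hT0.trans ht
    have hbound : ∀ s ∈ Set.Icc T t, |h s - L| ≤ ε := by
      intro s hs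
      have := hT₀ s ((le_max_left _ _).trans hs.1)
      rw [Real.dist_eq] at this
      exact this.le
    have hint : ∫ s in T..t, exp (b * s) * (h s - L) = W t - W T := by
      apply intervalIntegral.integral_eq_sub_of_hasDeriv_right_of_le ht
        (hWc.mono (fun s hs => hT0.trans hs.1))
      · intro s hs
        exact (hWd s (hT0.trans hs.1.le)).mono
          (fun x hx => (hT0.trans hs.1.le).trans hx.le)
      · apply ContinuousOn.intervalIntegrable
        rw [Set.uIcc_of_le ht]
        exact (continuous_exp.comp (continuous_const.mul continuous_id)).continuousOn.mul
          ((hh.mono (fun s hs => hT0.trans hs.1)).sub continuousOn_const)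
    have hexp : ∫ x in T..t, exp (b * x) = (exp (b * t) - exp (b * T)) / b := by
      have h2 : (b * ∫ x in T..t, exp (b * x)) = exp (b * t) - exp (b * T) := by
        rw [intervalIntegral.mul_integral_comp_mul_left]
        exact integral_exp
      rw [eq_div_iff hb.ne', mul_comm]
      exact h2
    have hintle : |W t - W T| ≤ ε / b * exp (b * t) := by
      rw [← hint, ← Real.norm_eq_abs]
      calc ‖∫ s in T..t, exp (b * s) * (h s - L)‖
          ≤ |∫ s in T..t, ε * exp (b * s)| := by
            refine le_trans ?_ (le_abs_self _)
            apply intervalIntegral.norm_integral_le_of_norm_le ht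
            · filter_upwards with s hs
              have hb1 := hbound s ⟨hs.1.le, hs.2⟩
              rw [Real.norm_eq_abs, abs_mul, abs_of_pos (exp_pos _)]
              calc exp (b*s) * |h s - L| ≤ exp (b*s) * ε :=
                    mul_le_mul_of_nonneg_left hb1 (exp_pos _).le
                _ = ε * exp (b * s) := mul_comm _ _
            · exact (continuous_const.mul (continuous_exp.comp
                (continuous_const.mul continuous_id))).continuousOn.intervalIntegrable
        _ ≤ ε / b * exp (b * t) := by
            rw [intervalIntegral.integral_const_mul, hexp]
            have h1 : exp (b * T) ≤ exp (b * t) := exp_le_exp.mpr (by nlinarith)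
            have h2 : (0:ℝ) < exp (b * T) := exp_pos _
            rw [abs_of_nonneg (mul_nonneg hε.le (div_nonneg (by linarith) hb.le))]
            calc ε * ((exp (b*t) - exp (b*T)) / b) ≤ ε * (exp (b*t) / b) := by
                  gcongr
                  linarith
              _ = ε / b * exp (b * t) := by ring
    -- conclude pointwise bound
    have hWtb : |W t| ≤ |W T| + ε / b * exp (b * t) := by
      calc |W t| = |W T + (W t - W T)| := congrArg abs (by ring)
        _ ≤ |W T| + |W t - W T| := abs_add_le _ _
        _ ≤ |W T| + ε / b * exp (b * t) := by linarith
    have hWabs : |W t| = exp (b * t) * |f t - L / b| := by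
      rw [hW]; simp [abs_mul, abs_of_pos (exp_pos _)]
    have hepos : (0:ℝ) < exp (b * t) := exp_pos _
    rw [hWabs] at hWtb
    have : |f t - L / b| ≤ (|W T| + ε / b * exp (b * t)) / exp (b * t) := by
      rw [le_div_iff₀ hepos]; linarith [mul_comm (exp (b*t)) (|f t - L / b|)]
    calc |f t - L / b| ≤ (|W T| + ε / b * exp (b * t)) / exp (b * t) := this
      _ = exp (-(b * t)) * |W T| + ε / b := by
          rw [exp_neg, add_div, mul_div_assoc, div_self hepos.ne', mul_one, div_eq_inv_mul]
  -- conclude the limit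
  have h0 : Tendsto (fun t => f t - L / b) atTop (nhds 0) := by
    rw [NormedAddCommGroup.tendsto_nhds_zero]
    intro ε' hε'
    obtain ⟨T, hT0, hbd⟩ := key (b * ε' / 2) (by positivity)
    have hd : Tendsto (fun t : ℝ => exp (-(b * t)) * |W T|) atTop (nhds 0) := by
      have h1 : Tendsto (fun t : ℝ => b * t) atTop atTop :=
        Tendsto.const_mul_atTop hb tendsto_id
      have h2 : Tendsto (fun t : ℝ => -(b * t)) atTop atBot :=
        tendsto_neg_atBot_iff.mpr h1
      simpa using (tendsto_exp_atBot.comp h2).mul_const |W T|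
    filter_upwards [hd.eventually (gt_mem_nhds (show (0:ℝ) < ε' / 2 by positivity)),
      eventually_ge_atTop T] with t h1 h2
    have hb2 := hbd t h2
    have h3 : b * ε' / 2 / b = ε' / 2 := by field_simp
    rw [h3] at hb2
    rw [Real.norm_eq_abs]
    linarith
  have := h0.add_const (L / b)
  simpa using this

theorem meanSampleLaplace_tendsto_equilibrium
    (γ σ : ℝ) (hγ : 0 < γ) (hσ : 0 < σ)
    (g : ℕ → ℝ → ℝ)
    (hg1 : ∀ t : ℝ, 0 ≤ t → g 1 t = 1)
    (hode : ∀ n : ℕ, 2 ≤ n → ∀ t : ℝ, 0 ≤ t →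
      HasDerivWithinAt (g n)
        (γ / 2 * (n : ℝ) * ((n : ℝ) - 1) * g (n - 1) t
          - γ / 2 * (n : ℝ) * (2 * σ / γ + (n : ℝ) - 1) * g n t)
        (Set.Ici 0) t)
    (n : ℕ) (hn : 2 ≤ n) :
    Tendsto (fun t => g n t) atTop
      (nhds (Real.Gamma n * Real.Gamma (2 * σ / γ + 1) / Real.Gamma (2 * σ / γ + n))) := by
  set σ' : ℝ := 2 * σ / γ with hσ'
  have hσ'pos : 0 < σ' := by positivity
  -- continuity of each g m on Ici 0, m ≥ 1
  have hcont : ∀ m : ℕ, 1 ≤ m → ContinuousOn (g m) (Set.Ici 0) := by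
    intro m hm
    rcases eq_or_lt_of_le hm with h1 | h2
    · exact (continuousOn_const (c := (1:ℝ))).congr (fun t ht => by rw [← h1]; exact hg1 t ht)
    · exact fun t ht => ((hode m h2 t ht).continuousWithinAt)
  -- main claim for all m ≥ 1
  have claim : ∀ m : ℕ, 1 ≤ m → Tendsto (fun t => g m t) atTop
      (nhds (Real.Gamma m * Real.Gamma (σ' + 1) / Real.Gamma (σ' + m))) := by
    intro m hm
    induction m, hm using Nat.le_induction with
    | base =>
      have : Real.Gamma (1:ℕ) * Real.Gamma (σ' + 1) / Real.Gamma (σ' + (1:ℕ)) = 1 := by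
        push_cast
        rw [Real.Gamma_one]
        field_simp [(Real.Gamma_pos_of_pos (by linarith : (0:ℝ) < σ' + 1)).ne']
      rw [this]
      apply Tendsto.congr' _ tendsto_const_nhds
      filter_upwards [eventually_ge_atTop (0:ℝ)] with t ht
      exact (hg1 t ht).symm
    | succ m hm ih =>
      have hm2 : 2 ≤ m + 1 := by omega
      set c : ℝ := γ / 2 * ((m+1 : ℕ) : ℝ) * (((m+1 : ℕ) : ℝ) - 1) with hc
      set b : ℝ := γ / 2 * ((m+1 : ℕ) : ℝ) * (σ' + ((m+1 : ℕ) : ℝ) - 1) with hb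
      have hm1 : (1:ℝ) ≤ (m:ℝ) := by exact_mod_cast hm
      have hbpos : 0 < b := by
        rw [hb]; push_cast
        have : (0:ℝ) < σ' + (m + 1) - 1 := by linarith
        positivity
      set Em : ℝ := Real.Gamma m * Real.Gamma (σ' + 1) / Real.Gamma (σ' + m) with hEm
      have hmain := ode_tendsto b (c * Em) hbpos (g (m+1)) (fun t => c * g m t)
        (fun t ht => by
          have := hode (m+1) hm2 t ht
          simpa [hc, hb] using this)
        ((continuousOn_const).mul (hcont m hm))
        (ih.const_mul c)
      have hval : c * Em / b =
          Real.Gamma ((m+1:ℕ):ℝ) * Real.Gamma (σ' + 1) / Real.Gamma (σ' + ((m+1:ℕ):ℝ)) := by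
        have hg1' : Real.Gamma (((m+1:ℕ)):ℝ) = (m:ℝ) * Real.Gamma m := by
          push_cast
          rw [Real.Gamma_add_one (by linarith : (m:ℝ) ≠ 0)]
        have hg2 : Real.Gamma (σ' + ((m+1:ℕ):ℝ)) = (σ' + m) * Real.Gamma (σ' + m) := by
          push_cast
          rw [show σ' + ((m:ℝ) + 1) = (σ' + m) + 1 by ring,
            Real.Gamma_add_one (by positivity : σ' + (m:ℝ) ≠ 0)]
        have hΓpos : 0 < Real.Gamma (σ' + m) := Real.Gamma_pos_of_pos (by positivity)
        rw [hg1', hg2, hEm, hc, hb]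
        push_cast
        have h1 : (0:ℝ) < σ' + (m+1) - 1 := by linarith
        field_simp
        ring
      rw [hval] at hmain
      exact hmain
  have := claim n (by omega)
  simpa [hσ'] using this
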